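/- Let k ≥ 0 be an integer and let E = {F_{2i} + 1 : i ≥ 1} be the set of even-indexed Fibonacci numbers shifted by 1. Then the set φ^{2k+2} ∗ E = {φ^{2k+2}·a mod 1 : a ∈ E}, ordered as a subset of ℝ, has order type ω (i.e., it is an increasing sequence with no infinite decreasing subsequence, equivalently it is well-ordered with order type ω). -/

import Mathlib

open Nat (fib)
open Real (goldenRatio goldenConj)

lemma s5_pos : (0:ℝ) < Real.sqrt 5 := Real.sqrt_pos.2 (by norm_num)
lemma s5_sq : (Real.sqrt 5)^2 = 5 := Real.sq_sqrt (by norm_num)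
lemma s5_gt : (2:ℝ) < Real.sqrt 5 := by nlinarith [s5_sq, s5_pos]
lemma s5_lt : Real.sqrt 5 < 3 := by nlinarith [s5_sq, s5_pos]

lemma keyI1 (m n : ℕ) :
    goldenRatio^m * (fib n : ℝ) = (fib (m+n) : ℝ) - goldenConj^n * (fib m : ℝ) := by
  rw [Real.coe_fib_eq, Real.coe_fib_eq, Real.coe_fib_eq, pow_add, pow_add]
  have h5 : Real.sqrt 5 ≠ 0 := ne_of_gt s5_pos
  field_simp
  ring

lemma lucasId (j : ℕ) : goldenRatio^(j+1) + goldenConj^(j+1) = ((fib (j+2) : ℝ) + fib j) := by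
  rw [Real.coe_fib_eq, Real.coe_fib_eq]
  have h5 : Real.sqrt 5 ≠ 0 := ne_of_gt s5_pos
  have hg : goldenRatio = (1 + Real.sqrt 5)/2 := rfl
  have hp : goldenConj = (1 - Real.sqrt 5)/2 := rfl
  have hφ : goldenRatio^2 + 1 = Real.sqrt 5 * goldenRatio := by
    rw [hg]; linear_combination (-1/4) * s5_sq
  have hψ : goldenConj^2 + 1 + Real.sqrt 5 * goldenConj = 0 := by
    rw [hp]; linear_combination (-1/4) * s5_sq
  rw [← add_div, eq_div_iff h5]
  linear_combination (-goldenRatio^j) * hφ + goldenConj^j * hψ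

private lemma alg3 (A B C D s : ℝ) (h : A*B = 1) (hs : s ≠ 0) :
    B*((A*C - B*D)/s) = (C - D)/s + (D - B*B*D)/s := by
  field_simp
  linear_combination C*h

private lemma alg4 (A B D s : ℝ) (h : A*B = 1) (hs : s ≠ 0) :
    (B*D)*((A - B)/s) = (D - B*B*D)/s := by
  field_simp
  linear_combination D*h

lemma keyI3 (i d : ℕ) :
    goldenConj^(2*i) * (fib (2*(i+d)) : ℝ)
      = (fib (2*d) : ℝ) + ((goldenConj^2)^d - (goldenConj^2)^(2*i+d))/Real.sqrt 5 := by
  have h5 : Real.sqrt 5 ≠ 0 := ne_of_gt s5_pos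
  have h1 : (goldenRatio^2 * goldenConj^2) = 1 := by nlinarith [Real.goldenRatio_mul_goldenConj]
  have h1i : (goldenRatio^2)^i * (goldenConj^2)^i = 1 := by rw [← mul_pow, h1, one_pow]
  have e1 : goldenConj^(2*i) = (goldenConj^2)^i := by rw [pow_mul]
  have e2 : goldenRatio^(2*(i+d)) = (goldenRatio^2)^i * (goldenRatio^2)^d := by
    rw [pow_mul, pow_add]
  have e3 : goldenConj^(2*(i+d)) = (goldenConj^2)^i * (goldenConj^2)^d := by
    rw [pow_mul, pow_add]
  have e4 : goldenRatio^(2*d) = (goldenRatio^2)^d := by rw [pow_mul]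
  have e5 : goldenConj^(2*d) = (goldenConj^2)^d := by rw [pow_mul]
  have e6 : (goldenConj^2)^(2*i+d) = (goldenConj^2)^i * ((goldenConj^2)^i * (goldenConj^2)^d) := by
    rw [pow_add, pow_mul']; ring
  rw [Real.coe_fib_eq, Real.coe_fib_eq, e1, e2, e3, e4, e5, e6]
  have := alg3 ((goldenRatio^2)^i) ((goldenConj^2)^i) ((goldenRatio^2)^d) ((goldenConj^2)^d)
    (Real.sqrt 5) h1i h5
  linear_combination this

lemma keyI4 (m d : ℕ) :
    goldenConj^(2*(m+d)) * (fib (2*m) : ℝ)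
      = ((goldenConj^2)^d - (goldenConj^2)^(2*m+d))/Real.sqrt 5 := by
  have h5 : Real.sqrt 5 ≠ 0 := ne_of_gt s5_pos
  have h1 : (goldenRatio^2 * goldenConj^2) = 1 := by nlinarith [Real.goldenRatio_mul_goldenConj]
  have h1m : (goldenRatio^2)^m * (goldenConj^2)^m = 1 := by rw [← mul_pow, h1, one_pow]
  have e1 : goldenConj^(2*(m+d)) = (goldenConj^2)^m * (goldenConj^2)^d := by
    rw [pow_mul, pow_add]
  have e2 : goldenRatio^(2*m) = (goldenRatio^2)^m := by rw [pow_mul]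
  have e3 : goldenConj^(2*m) = (goldenConj^2)^m := by rw [pow_mul]
  have e4 : (goldenConj^2)^(2*m+d) = (goldenConj^2)^m * ((goldenConj^2)^m * (goldenConj^2)^d) := by
    rw [pow_add, pow_mul']; ring
  rw [Real.coe_fib_eq, e1, e2, e3, e4]
  have := alg4 ((goldenRatio^2)^m) ((goldenConj^2)^m) ((goldenConj^2)^d) (Real.sqrt 5) h1m h5
  linear_combination this

lemma gc_sq_eq : goldenConj^2 = (3 - Real.sqrt 5)/2 := by
  have hp : goldenConj = (1 - Real.sqrt 5)/2 := rfl
  rw [hp]; linear_combination (1/4) * s5_sq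

lemma gc_sq_pos : 0 < goldenConj^2 := by nlinarith [gc_sq_eq, s5_lt]
lemma gc_sq_lt_one : goldenConj^2 < 1 := by nlinarith [gc_sq_eq, s5_gt]

noncomputable def Ee (k i : ℕ) : ℝ :=
  ((goldenConj^2)^((k+1-i)+(i-(k+1))) - (goldenConj^2)^(i+(k+1)))/Real.sqrt 5

lemma Ee_pos (k i : ℕ) (hi : 1 ≤ i) : 0 < Ee k i := by
  apply div_pos _ s5_pos
  have h : (k+1-i)+(i-(k+1)) < i+(k+1) := by omega
  have := pow_lt_pow_right_of_lt_one₀ gc_sq_pos gc_sq_lt_one h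
  linarith

lemma Ee_le_one_div (k i : ℕ) : Ee k i ≤ 1/Real.sqrt 5 := by
  unfold Ee
  gcongr
  have h1 : (goldenConj^2)^((k+1-i)+(i-(k+1))) ≤ 1 :=
    pow_le_one₀ gc_sq_pos.le gc_sq_lt_one.le
  have h2 : 0 ≤ (goldenConj^2)^(i+(k+1)) := by positivity
  linarith

lemma Ee_tail (k i : ℕ) (hi : k+1 ≤ i) :
    Ee k i = (goldenConj^2)^(i-(k+1)) * ((1 - (goldenConj^2)^(2*(k+1)))/Real.sqrt 5) := by
  unfold Ee
  rw [show (k+1-i)+(i-(k+1)) = i-(k+1) by omega,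
      show i+(k+1) = (i-(k+1)) + 2*(k+1) by omega, pow_add]
  field_simp

lemma Ee_tail_le (k i : ℕ) (hi : k+1 ≤ i) : Ee k i ≤ (goldenConj^2)^(i-(k+1)) := by
  rw [Ee_tail k i hi]
  have h2 : (1 - (goldenConj^2)^(2*(k+1)))/Real.sqrt 5 ≤ 1 := by
    have : (0:ℝ) ≤ (goldenConj^2)^(2*(k+1)) := by positivity
    rw [div_le_one s5_pos]; nlinarith [s5_gt]
  have h3 : (0:ℝ) ≤ (goldenConj^2)^(i-(k+1)) := by positivity
  nlinarith [h2, h3]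

lemma Ee_strictAnti (k : ℕ) {i j : ℕ} (hik : k+1 ≤ i) (hij : i < j) : Ee k j < Ee k i := by
  rw [Ee_tail k i hik, Ee_tail k j (by omega)]
  have hC : 0 < (1 - (goldenConj^2)^(2*(k+1)))/Real.sqrt 5 := by
    apply div_pos _ s5_pos
    have := pow_lt_one₀ gc_sq_pos.le gc_sq_lt_one (n := 2*(k+1)) (by omega)
    linarith
  have := pow_lt_pow_right_of_lt_one₀ gc_sq_pos gc_sq_lt_one (show i-(k+1) < j-(k+1) by omega)
  nlinarith [this, hC]

lemma bound_ok (k i : ℕ) (hi : 1 ≤ i) :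
    0 ≤ 1 - (goldenConj^2)^(k+1) - Ee k i ∧ 1 - (goldenConj^2)^(k+1) - Ee k i < 1 := by
  constructor
  · have h1 : (goldenConj^2)^(k+1) ≤ goldenConj^2 := by
      calc (goldenConj^2)^(k+1) ≤ (goldenConj^2)^1 :=
            pow_le_pow_of_le_one gc_sq_pos.le gc_sq_lt_one.le (by omega)
        _ = goldenConj^2 := pow_one _
    have h2 := Ee_le_one_div k i
    have h3 : goldenConj^2 + 1/Real.sqrt 5 < 1 := by
      have h4 : 1/Real.sqrt 5 < (Real.sqrt 5 - 1)/2 := by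
        rw [div_lt_div_iff₀ s5_pos (by norm_num)]
        nlinarith [s5_sq, s5_lt]
      rw [gc_sq_eq]; linarith
    linarith
  · have h1 : 0 < (goldenConj^2)^(k+1) := pow_pos gc_sq_pos _
    have h2 := Ee_pos k i hi
    linarith

lemma KL (k i : ℕ) (hi : 1 ≤ i) :
    Int.fract (goldenRatio ^ (2*k+2) * ((fib (2*i) : ℝ) + 1))
      = 1 - (goldenConj^2)^(k+1) - Ee k i := by
  have hpsi : goldenConj^(2*k+2) = (goldenConj^2)^(k+1) := by
    rw [show 2*k+2 = 2*(k+1) by omega, pow_mul]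
  have h1 := keyI1 (2*k+2) (2*i)
  have h2 := lucasId (2*k+1)
  rw [show 2*k+1+1 = 2*k+2 by omega, show 2*k+1+2 = 2*k+3 by omega, hpsi] at h2
  rcases le_or_gt i (k+1) with hik | hik
  · obtain ⟨d, hd⟩ : ∃ d, k+1 = i + d := ⟨k+1-i, by omega⟩
    have hE : Ee k i = ((goldenConj^2)^d - (goldenConj^2)^(i+(k+1)))/Real.sqrt 5 := by
      unfold Ee
      rw [show (k+1-i)+(i-(k+1)) = d by omega]
    have h3 := keyI3 i d
    rw [show 2*(i+d) = 2*k+2 by omega, show 2*i+d = i+(k+1) by omega] at h3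
    have key : goldenRatio ^ (2*k+2) * ((fib (2*i) : ℝ) + 1)
        = (((fib (2*k+2+2*i) : ℤ) + fib (2*k+3) + fib (2*k+1) - fib (2*d) - 1 : ℤ) : ℝ)
          + (1 - (goldenConj^2)^(k+1) - Ee k i) := by
      push_cast
      rw [hE]
      linear_combination h1 + h2 - h3
    rw [key, Int.fract_intCast_add, Int.fract_eq_self.2 ⟨(bound_ok k i hi).1, (bound_ok k i hi).2⟩]
  · obtain ⟨d, hd⟩ : ∃ d, i = (k+1) + d := ⟨i-(k+1), by omega⟩
    have hE : Ee k i = ((goldenConj^2)^d - (goldenConj^2)^(i+(k+1)))/Real.sqrt 5 := by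
      unfold Ee
      rw [show (k+1-i)+(i-(k+1)) = d by omega]
    have h3 := keyI4 (k+1) d
    rw [show 2*((k+1)+d) = 2*i by omega, show 2*(k+1)+d = i+(k+1) by omega,
        show 2*(k+1) = 2*k+2 by omega] at h3
    have key : goldenRatio ^ (2*k+2) * ((fib (2*i) : ℝ) + 1)
        = (((fib (2*k+2+2*i) : ℤ) + fib (2*k+3) + fib (2*k+1) - 1 : ℤ) : ℝ)
          + (1 - (goldenConj^2)^(k+1) - Ee k i) := by
      push_cast
      rw [hE]
      linear_combination h1 + h2 - h3
    rw [key, Int.fract_intCast_add, Int.fract_eq_self.2 ⟨(bound_ok k i hi).1, (bound_ok k i hi).2⟩]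

lemma aux_orderIso (s : Set ℝ) (hinf : s.Infinite)
    (hfin : ∀ x ∈ s, {y | y ∈ s ∧ y < x}.Finite) : Nonempty (↥s ≃o ℕ) := by
  classical
  haveI : Infinite ↥s := hinf.to_subtype
  let r : ↥s → ℕ := fun x => (hfin x x.2).toFinset.card
  have hmono : StrictMono r := by
    intro a b hab
    have hsub : (hfin a a.2).toFinset ⊆ (hfin b b.2).toFinset := by
      intro y hy
      simp only [Set.Finite.mem_toFinset, Set.mem_setOf_eq] at hy ⊢
      exact ⟨hy.1, hy.2.trans hab⟩
    have hmem : (a:ℝ) ∈ (hfin b b.2).toFinset := by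
      simp only [Set.Finite.mem_toFinset, Set.mem_setOf_eq]
      exact ⟨a.2, hab⟩
    have hnot : (a:ℝ) ∉ (hfin a a.2).toFinset := by
      simp only [Set.Finite.mem_toFinset, Set.mem_setOf_eq]
      exact fun h => lt_irrefl _ h.2
    exact Finset.card_lt_card ((Finset.ssubset_iff_of_subset hsub).2 ⟨a, hmem, hnot⟩)
  haveI : Infinite ↥(Set.range r) :=
    Set.infinite_coe_iff.2 (Set.infinite_range_of_injective hmono.injective)
  exact ⟨(StrictMono.orderIso r hmono).trans (Nat.Subtype.orderIsoOfNat (Set.range r)).symm⟩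

/-- For `k ≥ 0` and `E = {F_{2i} + 1 : i ≥ 1}`, the set
`φ^{2k+2} ∗ E = {φ^{2k+2}·a mod 1 : a ∈ E}` has order type `ω`,
i.e. it is order-isomorphic to `ℕ`. -/
theorem stmt_4 (k : ℕ) :
    Nonempty
      ((↥((fun a : ℕ => Int.fract (Real.goldenRatio ^ (2 * k + 2) * a)) ''
          ((fun i : ℕ => Nat.fib (2 * i) + 1) '' {i | 1 ≤ i}))) ≃o ℕ) := by
  classical
  have hset : ((fun a : ℕ => Int.fract (goldenRatio ^ (2 * k + 2) * a)) ''
      ((fun i : ℕ => Nat.fib (2 * i) + 1) '' {i | 1 ≤ i}))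
      = (fun i : ℕ => Int.fract (goldenRatio ^ (2*k+2) * ((fib (2*i) + 1 : ℕ) : ℝ))) ''
        {i | 1 ≤ i} := by
    rw [Set.image_image]
  set f : ℕ → ℝ :=
    fun i : ℕ => Int.fract (goldenRatio ^ (2*k+2) * ((fib (2*i) + 1 : ℕ) : ℝ)) with hf
  have hfKL : ∀ i : ℕ, 1 ≤ i → f i = 1 - (goldenConj^2)^(k+1) - Ee k i := by
    intro i hi
    rw [hf]
    simp only
    rw [show ((fib (2*i) + 1 : ℕ) : ℝ) = (fib (2*i) : ℝ) + 1 by push_cast; ring]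
    exact KL k i hi
  rw [hset]
  apply aux_orderIso
  · have hmono : StrictMonoOn f (Set.Ici (k+1)) := by
      intro a ha b hb hab
      rw [hfKL a (le_trans (by omega) ha), hfKL b (le_trans (by omega) hb)]
      have := Ee_strictAnti k ha hab
      linarith
    have hinf : (f '' Set.Ici (k+1)).Infinite :=
      Set.Infinite.image hmono.injOn (Set.Ici_infinite _)
    exact hinf.mono (Set.image_mono (show Set.Ici (k+1) ⊆ {i : ℕ | 1 ≤ i} from fun j (hj : k+1 ≤ j) => (show 1 ≤ j by omega)))
  · intro x hx
    obtain ⟨i, hi, rfl⟩ := hx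
    have hi : 1 ≤ i := hi
    obtain ⟨m, hm⟩ := exists_pow_lt_of_lt_one (Ee_pos k i hi) gc_sq_lt_one
    apply Set.Finite.subset (Set.Finite.image f (Set.finite_Iio (k+1+m)))
    rintro y ⟨⟨j, hj, rfl⟩, hy2⟩
    have hj : 1 ≤ j := hj
    refine ⟨j, ?_, rfl⟩
    simp only [Set.mem_Iio]
    by_contra h
    push_neg at h
    have hj2 : k+1 ≤ j := by omega
    have hle : Ee k j ≤ (goldenConj^2)^(j-(k+1)) := Ee_tail_le k j hj2
    have h2 : (goldenConj^2)^(j-(k+1)) ≤ (goldenConj^2)^m :=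
      pow_le_pow_of_le_one gc_sq_pos.le gc_sq_lt_one.le (by omega)
    have hgt : f i < f j := by
      rw [hfKL j hj, hfKL i hi]
      linarith
    exact absurd hy2 (not_lt.2 hgt.le)
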